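/- Let (T,d,μ) and (T',d',μ') be compact measured ℝ-trees with marked pairs of points (x_i,y_i), 1 ≤ i ≤ k, in T and (x_i',y_i') in T'. Let (T̂,d̂,μ̂) and (T̂',d̂',μ̂') be the quotient measured metric spaces obtained by identifying x_i with y_i (resp. x_i' with y_i') for each i. Then d_GHP(T̂, T̂') ≤ (k+1)·d_GHP^{2k,1}((T,d,x,μ),(T',d',x',μ')), where x = (x_1,…,x_k,y_1,…,y_k) and similarly x'. -/

import Mathlib

/-!
Statement 7: gluing marked pairs of points in measured ℝ-trees increases the
GHP distance by at most a factor (k+1):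
d_GHP(T̂, T̂') ≤ (k+1) · d_GHP^{2k,1}((T,d,x,μ),(T',d',x',μ')).

The quotient (glued) space is represented by the quotient pseudo-distance
`glueDist` on the original space (the GHP distance, being defined through
correspondences and couplings, only depends on this pseudo-distance and the
measures).
-/

open MeasureTheory Set
open scoped ENNReal

/-- Geodesic metric space: any two points are joined by an isometric path. -/
def IsGeodesicSpace (X : Type) [MetricSpace X] : Prop :=
  ∀ x y : X, ∃ f : ℝ → X, f 0 = x ∧ f (dist x y) = y ∧
    ∀ s ∈ Icc (0 : ℝ) (dist x y), ∀ t ∈ Icc (0 : ℝ) (dist x y),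
      dist (f s) (f t) = |s - t|

/-- No embedded cycle: no continuous injective image of the circle. -/
def NoEmbeddedCycle (X : Type) [TopologicalSpace X] : Prop :=
  ¬ ∃ f : AddCircle (1 : ℝ) → X, Continuous f ∧ Function.Injective f

/-- An ℝ-tree is an acyclic geodesic metric space. -/
def IsRTree (X : Type) [MetricSpace X] : Prop :=
  IsGeodesicSpace X ∧ NoEmbeddedCycle X

/-- Sum of distances along a chain of identified pairs. -/
def chainSum {T : Type} (d : T → T → ℝ) : T → T → List (T × T) → ℝ
  | a, b, [] => d a b
  | a, b, p :: L => d a p.1 + chainSum d p.2 b L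

/-- The quotient pseudo-distance on `T` obtained by identifying the two
coordinates of each pair in `R` (glueing). -/
noncomputable def glueDist {T : Type} [MetricSpace T] (R : Set (T × T))
    (a b : T) : ℝ :=
  sInf {s | ∃ L : List (T × T), (∀ p ∈ L, p ∈ R ∨ Prod.swap p ∈ R) ∧
    s = chainSum (fun u v => dist u v) a b L}

/-- A correspondence between `X` and `Y`. -/
def IsCorrespondence {X Y : Type} (C : Set (X × Y)) : Prop :=
  (∀ x : X, ∃ y : Y, (x, y) ∈ C) ∧ ∀ y : Y, ∃ x : X, (x, y) ∈ C

/-- The distortion of `C` with respect to given (pseudo-)distances. -/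
noncomputable def disOf {X Y : Type} (dX : X → X → ℝ) (dY : Y → Y → ℝ)
    (C : Set (X × Y)) : ℝ≥0∞ :=
  ⨆ p ∈ C, ⨆ q ∈ C, ENNReal.ofReal |dX p.1 q.1 - dY p.2 q.2|

/-- Total variation norm of the difference of two finite measures. -/
noncomputable def tvDist {X : Type} [MeasurableSpace X]
    (μ ν : Measure X) : ℝ≥0∞ :=
  (⨆ (s : Set X) (_ : MeasurableSet s), μ s - ν s) +
    ⨆ (s : Set X) (_ : MeasurableSet s), ν s - μ s

/-- Discrepancy of `π` with respect to `μ` and `ν`. -/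
noncomputable def discrepancy {X Y : Type} [MeasurableSpace X] [MeasurableSpace Y]
    (μ : Measure X) (ν : Measure Y) (π : Measure (X × Y)) : ℝ≥0∞ :=
  tvDist μ (π.map Prod.fst) + tvDist ν (π.map Prod.snd)

/-- GHP distance computed for arbitrary (pseudo-)distances `dX`, `dY`, with a
set `marks` of marked pairs that every admissible correspondence must
contain.  With `marks = ∅` this is the (pseudo-)GHP distance; with the set of
marked pairs it is the marked distance `d_GHP^{k,1}`. -/
noncomputable def ghpOf {X Y : Type} [MeasurableSpace X] [MeasurableSpace Y]
    (dX : X → X → ℝ) (dY : Y → Y → ℝ)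
    (μ : Measure X) (ν : Measure Y) (marks : Set (X × Y)) : ℝ≥0∞ :=
  ⨅ (C : Set (X × Y)) (_ : IsCorrespondence C) (_ : MeasurableSet C)
    (_ : marks ⊆ C) (π : Measure (X × Y)),
    (disOf dX dY C / 2) ⊔ discrepancy μ ν π ⊔ π Cᶜ

set_option linter.unusedSectionVars false

section AuxChain

variable {X Y : Type} [MetricSpace X] [MetricSpace Y]

lemma chainSum_nonneg (L : List (X × X)) :
    ∀ a b : X, 0 ≤ chainSum (fun u v => dist u v) a b L := by
  induction L with
  | nil => intro a b; simpa [chainSum] using dist_nonneg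
  | cons p L ih =>
    intro a b
    simp only [chainSum]
    exact add_nonneg dist_nonneg (ih p.2 b)

lemma chainSum_append (d : X → X → ℝ) (M : List (X × X)) (q : X × X) (N : List (X × X)) :
    ∀ a b : X, chainSum d a b (M ++ q :: N) = chainSum d a q.1 M + chainSum d q.2 b N := by
  induction M with
  | nil => intro a b; simp [chainSum]
  | cons r M ih =>
    intro a b
    simp only [List.cons_append, chainSum, List.append_eq]
    rw [ih r.2 b]
    ring

lemma chainSum_le_cons (N : List (X × X)) : ∀ a b c : X,
    chainSum (fun u v => dist u v) a b N
      ≤ dist a c + chainSum (fun u v => dist u v) c b N := by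
  cases N with
  | nil => intro a b c; simpa [chainSum] using dist_triangle a c b
  | cons r N =>
    intro a b c
    simp only [chainSum]
    have := dist_triangle a c r.1
    linarith

/-- Validity of a chain with respect to the marked pairs. -/
def validL {k : ℕ} (x y : Fin k → X) (L : List (X × X)) : Prop :=
  ∀ p ∈ L, ∃ i : Fin k, p = (x i, y i) ∨ p = (y i, x i)

open scoped Classical in
/-- Index of a valid pair. -/
noncomputable def pairIdx {k : ℕ} (x y : Fin k → X) (p : X × X) : ℕ :=
  if h : ∃ i : Fin k, p = (x i, y i) ∨ p = (y i, x i) then (h.choose : ℕ) else 0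

lemma pairIdx_eq {k : ℕ} (x y : Fin k → X) {p q : X × X}
    (hp : ∃ i : Fin k, p = (x i, y i) ∨ p = (y i, x i))
    (hq : ∃ i : Fin k, q = (x i, y i) ∨ q = (y i, x i))
    (h : pairIdx x y p = pairIdx x y q) : q = p ∨ q = p.swap := by
  simp only [pairIdx] at h
  rw [dif_pos hp, dif_pos hq] at h
  have hi : hp.choose = hq.choose := Fin.val_injective h
  have h1 := hp.choose_spec
  have h2 := hq.choose_spec
  rw [← hi] at h2
  rcases h1 with h1 | h1 <;> rcases h2 with h2 | h2 <;> rw [h1, h2] <;> simp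

lemma length_le_of_nodup {k : ℕ} (x y : Fin k → X) (L : List (X × X)) (hv : validL x y L)
    (hnd : (L.map (pairIdx x y)).Nodup) : L.length ≤ k := by
  classical
  have hsub : (L.map (pairIdx x y)).toFinset ⊆ Finset.range k := by
    intro n hn
    rw [List.mem_toFinset, List.mem_map] at hn
    obtain ⟨p, hp, rfl⟩ := hn
    have h := hv p hp
    simp only [pairIdx]
    rw [dif_pos h]
    exact Finset.mem_range.mpr h.choose.isLt
  have hcard := Finset.card_le_card hsub
  rwa [List.toFinset_card_of_nodup hnd, List.length_map, Finset.card_range] at hcard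

/-- Any valid chain can be replaced by one without repeated pairs (up to swap)
without increasing the chain sum. -/
lemma chain_reduce {k : ℕ} (x y : Fin k → X) :
    ∀ L : List (X × X), validL x y L →
      ∃ L' : List (X × X), validL x y L' ∧ (L'.map (pairIdx x y)).Nodup ∧
        ∀ a b : X, chainSum (fun u v => dist u v) a b L'
          ≤ chainSum (fun u v => dist u v) a b L := by
  intro L
  induction L with
  | nil => exact fun _ => ⟨[], by intro p hp; simp at hp, by simp, fun a b => le_rfl⟩
  | cons p L ih =>
    intro hv
    have hvp : ∃ i : Fin k, p = (x i, y i) ∨ p = (y i, x i) := hv p (List.mem_cons_self)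
    have hvL : validL x y L := fun q hq => hv q (List.mem_cons_of_mem _ hq)
    obtain ⟨L'', h1, h2, h3⟩ := ih hvL
    by_cases hmem : pairIdx x y p ∈ L''.map (pairIdx x y)
    · obtain ⟨q, hqmem, hq⟩ := List.mem_map.mp hmem
      obtain ⟨A, B, hAB⟩ := List.append_of_mem hqmem
      subst hAB
      have hpq : p = q ∨ p = q.swap := pairIdx_eq x y (h1 q hqmem) hvp hq
      have hndB : ((q :: B).map (pairIdx x y)).Nodup := by
        refine List.Nodup.sublist ?_ h2
        rw [List.map_append]
        exact List.sublist_append_right _ _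
      rcases hpq with hpq | hpq
      · -- p = q : keep q :: B
        refine ⟨q :: B, ?_, hndB, ?_⟩
        · intro r hr
          rcases List.mem_cons.mp hr with rfl | hr
          · exact h1 _ hqmem
          · exact h1 r (by simp [List.mem_append, hr])
        · intro a b
          have hA0 : 0 ≤ chainSum (fun u v => dist u v) q.2 q.1 A := chainSum_nonneg A _ _
          have hsplit := chainSum_append (fun u v => dist u v) A q B q.2 b
          have h3' := h3 q.2 b
          rw [hsplit] at h3'
          simp only [chainSum, hpq]
          linarith
      · -- p = q.swap : drop both, keep B
        have hndB' : (B.map (pairIdx x y)).Nodup := by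
          rw [List.map_cons, List.nodup_cons] at hndB
          exact hndB.2
        refine ⟨B, ?_, hndB', ?_⟩
        · intro r hr
          exact h1 r (by simp [List.mem_append, hr])
        · intro a b
          have hp1 : p.1 = q.2 := by rw [hpq]; rfl
          have hp2 : p.2 = q.1 := by rw [hpq]; rfl
          have hsplit := chainSum_append (fun u v => dist u v) A q B p.2 b
          have h3' := h3 p.2 b
          rw [hsplit] at h3'
          have htri := chainSum_le_cons B a b q.2
          have hA0 : 0 ≤ chainSum (fun u v => dist u v) p.2 q.1 A := chainSum_nonneg A _ _
          simp only [chainSum]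
          rw [hp1]
          linarith
    · refine ⟨p :: L'', ?_, ?_, ?_⟩
      · intro r hr
        rcases List.mem_cons.mp hr with rfl | hr
        · exact hvp
        · exact h1 r hr
      · rw [List.map_cons, List.nodup_cons]
        exact ⟨hmem, h2⟩
      · intro a b
        simp only [chainSum]
        have := h3 p.2 b
        linarith

lemma chain_shorten {k : ℕ} (x y : Fin k → X) (L : List (X × X)) (hv : validL x y L) :
    ∃ L' : List (X × X), validL x y L' ∧ L'.length ≤ k ∧
      ∀ a b : X, chainSum (fun u v => dist u v) a b L'
        ≤ chainSum (fun u v => dist u v) a b L := by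
  obtain ⟨L', h1, h2, h3⟩ := chain_reduce x y L hv
  exact ⟨L', h1, length_le_of_nodup x y L' h1 h2, h3⟩

end AuxChain
section AuxGlue

variable {X Y : Type} [MetricSpace X] [MetricSpace Y]

/-- Transfer of a chain through a correspondence. -/
lemma chain_transfer {k : ℕ} (xX yX : Fin k → X) (xY yY : Fin k → Y) (C : Set (X × Y))
    (hx : ∀ i, (xX i, xY i) ∈ C) (hy : ∀ i, (yX i, yY i) ∈ C) (e : ℝ)
    (he : ∀ p ∈ C, ∀ q ∈ C, dist p.2 q.2 ≤ dist p.1 q.1 + e) :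
    ∀ L : List (X × X), validL xX yX L → ∀ (a a' : X) (b b' : Y),
      (a, b) ∈ C → (a', b') ∈ C →
      ∃ L' : List (Y × Y), validL xY yY L' ∧
        chainSum (fun u v => dist u v) b b' L'
          ≤ chainSum (fun u v => dist u v) a a' L + (L.length + 1) * e := by
  intro L
  induction L with
  | nil =>
    intro _ a a' b b' ha ha'
    refine ⟨[], by intro p hp; simp at hp, ?_⟩
    have := he _ ha _ ha'
    simp only [chainSum, List.length_nil, Nat.cast_zero] at this ⊢
    linarith
  | cons p L ih =>
    intro hv a a' b b' ha ha'
    obtain ⟨i, hi⟩ := hv p (List.mem_cons_self)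
    have hvL : validL xX yX L := fun q hq => hv q (List.mem_cons_of_mem _ hq)
    rcases hi with hi | hi
    · obtain ⟨L', hL'v, hL'⟩ := ih hvL (yX i) a' (yY i) b' (hy i) ha'
      refine ⟨(xY i, yY i) :: L', ?_, ?_⟩
      · intro q hq
        rcases List.mem_cons.mp hq with rfl | hq
        · exact ⟨i, Or.inl rfl⟩
        · exact hL'v q hq
      · have h1 : dist b (xY i) ≤ dist a (xX i) + e := he _ ha _ (hx i)
        simp only [chainSum, hi, List.length_cons]
        push_cast
        linarith
    · obtain ⟨L', hL'v, hL'⟩ := ih hvL (xX i) a' (xY i) b' (hx i) ha'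
      refine ⟨(yY i, xY i) :: L', ?_, ?_⟩
      · intro q hq
        rcases List.mem_cons.mp hq with rfl | hq
        · exact ⟨i, Or.inr rfl⟩
        · exact hL'v q hq
      · have h1 : dist b (yY i) ≤ dist a (yX i) + e := he _ ha _ (hy i)
        simp only [chainSum, hi, List.length_cons]
        push_cast
        linarith

lemma glueSet_nonempty (R : Set (X × X)) (a b : X) :
    Set.Nonempty {s | ∃ L : List (X × X), (∀ p ∈ L, p ∈ R ∨ Prod.swap p ∈ R) ∧
      s = chainSum (fun u v => dist u v) a b L} :=
  ⟨chainSum (fun u v => dist u v) a b [], [], by intro p hp; simp at hp, rfl⟩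

lemma glueSet_bddBelow (R : Set (X × X)) (a b : X) :
    BddBelow {s | ∃ L : List (X × X), (∀ p ∈ L, p ∈ R ∨ Prod.swap p ∈ R) ∧
      s = chainSum (fun u v => dist u v) a b L} := by
  refine ⟨0, fun s hs => ?_⟩
  obtain ⟨L, _, rfl⟩ := hs
  exact chainSum_nonneg L a b

lemma glueDist_le_chainSum (R : Set (X × X)) (a b : X) (L : List (X × X))
    (hL : ∀ p ∈ L, p ∈ R ∨ Prod.swap p ∈ R) :
    glueDist R a b ≤ chainSum (fun u v => dist u v) a b L :=
  csInf_le (glueSet_bddBelow R a b) ⟨L, hL, rfl⟩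

/-- Membership condition of the glueing relation, for `R` a range of pairs. -/
lemma mem_glue_rel_iff {k : ℕ} (x y : Fin k → X) (p : X × X) :
    (p ∈ Set.range (fun i => (x i, y i)) ∨ Prod.swap p ∈ Set.range (fun i => (x i, y i)))
      ↔ ∃ i : Fin k, p = (x i, y i) ∨ p = (y i, x i) := by
  constructor
  · rintro (⟨i, hi⟩ | ⟨i, hi⟩)
    · exact ⟨i, Or.inl hi.symm⟩
    · refine ⟨i, Or.inr ?_⟩
      have := congrArg Prod.swap hi
      simpa [Prod.ext_iff] using this.symm
  · rintro ⟨i, hi | hi⟩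
    · exact Or.inl ⟨i, hi.symm⟩
    · refine Or.inr ⟨i, ?_⟩
      rw [hi]
      rfl

/-- The main one-sided comparison of glued distances through a correspondence. -/
lemma glue_le {k : ℕ} (xX yX : Fin k → X) (xY yY : Fin k → Y) (C : Set (X × Y))
    (hx : ∀ i, (xX i, xY i) ∈ C) (hy : ∀ i, (yX i, yY i) ∈ C)
    (e : ℝ) (he0 : 0 ≤ e)
    (he : ∀ p ∈ C, ∀ q ∈ C, dist p.2 q.2 ≤ dist p.1 q.1 + e)
    {a a' : X} {b b' : Y} (ha : (a, b) ∈ C) (ha' : (a', b') ∈ C) :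
    glueDist (Set.range fun i => (xY i, yY i)) b b'
      ≤ glueDist (Set.range fun i => (xX i, yX i)) a a' + (k + 1) * e := by
  have key : ∀ s ∈ {s | ∃ L : List (X × X),
      (∀ p ∈ L, p ∈ (Set.range fun i => (xX i, yX i)) ∨
        Prod.swap p ∈ (Set.range fun i => (xX i, yX i))) ∧
      s = chainSum (fun u v => dist u v) a a' L},
      glueDist (Set.range fun i => (xY i, yY i)) b b' ≤ s + (k + 1) * e := by
    rintro s ⟨L, hLmem, rfl⟩
    have hLv : validL xX yX L := fun p hp => (mem_glue_rel_iff xX yX p).mp (hLmem p hp)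
    obtain ⟨L₀, hL₀v, hL₀len, hL₀⟩ := chain_shorten xX yX L hLv
    obtain ⟨L', hL'v, hL'⟩ := chain_transfer xX yX xY yY C hx hy e he L₀ hL₀v a a' b b' ha ha'
    have hmem' : ∀ p ∈ L', p ∈ (Set.range fun i => (xY i, yY i)) ∨
        Prod.swap p ∈ (Set.range fun i => (xY i, yY i)) :=
      fun p hp => (mem_glue_rel_iff xY yY p).mpr (hL'v p hp)
    have h1 := glueDist_le_chainSum (Set.range fun i => (xY i, yY i)) b b' L' hmem'
    have h2 : ((L₀.length : ℝ) + 1) * e ≤ ((k : ℝ) + 1) * e := by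
      apply mul_le_mul_of_nonneg_right _ he0
      have : (L₀.length : ℝ) ≤ (k : ℝ) := by exact_mod_cast hL₀len
      linarith
    have h3 := hL₀ a a'
    linarith
  have h2 : glueDist (Set.range fun i => (xY i, yY i)) b b' - (k + 1) * e
      ≤ glueDist (Set.range fun i => (xX i, yX i)) a a' := by
    conv_rhs => rw [glueDist]
    refine le_csInf (glueSet_nonempty _ a a') fun s hs => ?_
    linarith [key s hs]
  linarith

end AuxGlue
lemma ennreal_mul_iInf {ι : Sort*} (f : ι → ℝ≥0∞) {c : ℝ≥0∞} (h0 : c ≠ 0) (ht : c ≠ ⊤) :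
    (⨅ i, c * f i) = c * ⨅ i, f i := by
  refine le_antisymm ?_ (le_iInf fun i => mul_le_mul_right (iInf_le f i) c)
  have h1 : c⁻¹ * (⨅ i, c * f i) ≤ ⨅ i, f i := by
    refine le_iInf fun i => ?_
    calc c⁻¹ * (⨅ j, c * f j) ≤ c⁻¹ * (c * f i) := mul_le_mul_right (iInf_le _ i) _
      _ = f i := by rw [← mul_assoc, ENNReal.inv_mul_cancel h0 ht, one_mul]
  calc (⨅ i, c * f i) = c * (c⁻¹ * ⨅ i, c * f i) := by
        rw [← mul_assoc, ENNReal.mul_inv_cancel h0 ht, one_mul]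
    _ ≤ c * ⨅ i, f i := mul_le_mul_right h1 _
theorem ghp_of_glued_trees_le
    {T T' : Type} [MetricSpace T] [MetricSpace T']
    [MeasurableSpace T] [BorelSpace T] [MeasurableSpace T'] [BorelSpace T']
    [CompactSpace T] [CompactSpace T'] [Nonempty T] [Nonempty T']
    (hT : IsRTree T) (hT' : IsRTree T')
    (μ : Measure T) (ν : Measure T') [IsFiniteMeasure μ] [IsFiniteMeasure ν]
    (k : ℕ) (x y : Fin k → T) (x' y' : Fin k → T') :
    ghpOf (glueDist (Set.range fun i => (x i, y i)))
        (glueDist (Set.range fun i => (x' i, y' i))) μ ν ∅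
      ≤ ((k : ℝ≥0∞) + 1) *
        ghpOf (fun a b => dist a b) (fun a b => dist a b) μ ν
          (Set.range (fun i => (x i, x' i)) ∪ Set.range fun i => (y i, y' i)) := by
  classical
  set M : Set (T × T') :=
    Set.range (fun i => (x i, x' i)) ∪ Set.range fun i => (y i, y' i) with hMdef
  set c : ℝ≥0∞ := (k : ℝ≥0∞) + 1 with hcdef
  have hc0 : c ≠ 0 := by simp [hcdef]
  have hct : c ≠ ⊤ := by
    simp [hcdef]
  have hone : (1 : ℝ≥0∞) ≤ c := by
    rw [hcdef]; exact le_add_self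
  have key : ∀ (C : Set (T × T')), IsCorrespondence C → MeasurableSet C →
      M ⊆ C → ∀ π : Measure (T × T'),
      ghpOf (glueDist (Set.range fun i => (x i, y i)))
        (glueDist (Set.range fun i => (x' i, y' i))) μ ν ∅
      ≤ c * ((disOf (fun a b => dist a b) (fun a b => dist a b) C / 2)
          ⊔ discrepancy μ ν π ⊔ π Cᶜ) := by
    intro C hC hCm hMC π
    have hstep : ghpOf (glueDist (Set.range fun i => (x i, y i)))
        (glueDist (Set.range fun i => (x' i, y' i))) μ ν ∅
        ≤ (disOf (glueDist (Set.range fun i => (x i, y i)))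
            (glueDist (Set.range fun i => (x' i, y' i))) C / 2)
          ⊔ discrepancy μ ν π ⊔ π Cᶜ := by
      rw [ghpOf]
      exact iInf_le_of_le C (iInf_le_of_le hC (iInf_le_of_le hCm
        (iInf_le_of_le (Set.empty_subset C) (iInf_le _ π))))
    refine hstep.trans ?_
    set D := disOf (fun a b => dist a b) (fun a b => dist a b) C with hDdef
    have hdis : disOf (glueDist (Set.range fun i => (x i, y i)))
        (glueDist (Set.range fun i => (x' i, y' i))) C ≤ c * D := by
      by_cases hDt : D = ⊤
      · rw [hDt, ENNReal.mul_top hc0]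
        exact le_top
      · set e := D.toReal with hedef
        have he0 : 0 ≤ e := ENNReal.toReal_nonneg
        have habs : ∀ p ∈ C, ∀ q ∈ C, |dist p.1 q.1 - dist p.2 q.2| ≤ e := by
          intro p hp q hq
          have h1 : ENNReal.ofReal |dist p.1 q.1 - dist p.2 q.2| ≤ D := by
            rw [hDdef, disOf]
            exact le_iSup₂_of_le p hp (le_iSup₂_of_le q hq le_rfl)
          exact (ENNReal.ofReal_le_iff_le_toReal hDt).mp h1
        have hx : ∀ i, (x i, x' i) ∈ C := fun i => hMC (Or.inl ⟨i, rfl⟩)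
        have hy : ∀ i, (y i, y' i) ∈ C := fun i => hMC (Or.inr ⟨i, rfl⟩)
        have hpair : ∀ p ∈ C, ∀ q ∈ C,
            |glueDist (Set.range fun i => (x i, y i)) p.1 q.1
              - glueDist (Set.range fun i => (x' i, y' i)) p.2 q.2| ≤ ((k : ℝ) + 1) * e := by
          intro p hp q hq
          have hp' : (p.1, p.2) ∈ C := by simpa using hp
          have hq' : (q.1, q.2) ∈ C := by simpa using hq
          have h1 : glueDist (Set.range fun i => (x' i, y' i)) p.2 q.2
              ≤ glueDist (Set.range fun i => (x i, y i)) p.1 q.1 + ((k : ℝ) + 1) * e := by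
            refine glue_le x y x' y' C hx hy e he0 ?_ hp' hq'
            intro u hu v hv
            have := habs u hu v hv
            rw [abs_sub_le_iff] at this
            linarith [this.2]
          have h2 : glueDist (Set.range fun i => (x i, y i)) p.1 q.1
              ≤ glueDist (Set.range fun i => (x' i, y' i)) p.2 q.2 + ((k : ℝ) + 1) * e := by
            have hp'' : ((p.2, p.1) : T' × T) ∈ Prod.swap ⁻¹' C := by
              simpa [Set.mem_preimage] using hp
            have hq'' : ((q.2, q.1) : T' × T) ∈ Prod.swap ⁻¹' C := by
              simpa [Set.mem_preimage] using hq
            refine glue_le x' y' x y (Prod.swap ⁻¹' C)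
              (fun i => by simpa [Set.mem_preimage] using hx i)
              (fun i => by simpa [Set.mem_preimage] using hy i) e he0 ?_ hp'' hq''
            intro u hu v hv
            have := habs u.swap (Set.mem_preimage.mp hu) v.swap (Set.mem_preimage.mp hv)
            rw [abs_sub_le_iff] at this
            have h := this.1
            simp only [Prod.fst_swap, Prod.snd_swap] at h
            linarith
          rw [abs_sub_le_iff]
          constructor <;> linarith
        rw [disOf]
        refine iSup₂_le fun p hp => iSup₂_le fun q hq => ?_
        calc ENNReal.ofReal |glueDist (Set.range fun i => (x i, y i)) p.1 q.1
              - glueDist (Set.range fun i => (x' i, y' i)) p.2 q.2|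
            ≤ ENNReal.ofReal (((k : ℝ) + 1) * e) :=
              ENNReal.ofReal_le_ofReal (hpair p hp q hq)
          _ = c * D := by
              rw [ENNReal.ofReal_mul (by positivity), ENNReal.ofReal_toReal hDt,
                ENNReal.ofReal_add (Nat.cast_nonneg k) zero_le_one,
                ENNReal.ofReal_natCast, ENNReal.ofReal_one]
    refine sup_le (sup_le ?_ ?_) ?_
    · refine le_trans (ENNReal.div_le_div_right hdis 2) ?_
      rw [mul_div_assoc]
      exact mul_le_mul_right (le_sup_of_le_left le_sup_left) c
    · exact le_trans (le_sup_of_le_left le_sup_right)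
        (le_mul_of_one_le_left zero_le hone)
    · exact le_trans le_sup_right (le_mul_of_one_le_left zero_le hone)
  have hmid : ghpOf (glueDist (Set.range fun i => (x i, y i)))
      (glueDist (Set.range fun i => (x' i, y' i))) μ ν ∅
      ≤ ⨅ (C : Set (T × T')) (_ : IsCorrespondence C) (_ : MeasurableSet C)
          (_ : M ⊆ C) (π : Measure (T × T')),
          c * ((disOf (fun a b => dist a b) (fun a b => dist a b) C / 2)
            ⊔ discrepancy μ ν π ⊔ π Cᶜ) :=
    le_iInf fun C => le_iInf fun h1 => le_iInf fun h2 => le_iInf fun h3 =>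
      le_iInf fun π => key C h1 h2 h3 π
  refine hmid.trans ?_
  rw [ghpOf]
  simp_rw [← ennreal_mul_iInf _ hc0 hct]
  exact le_rfl
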